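/- arXiv:2011.01732 — 3 statements merged into one kernel-verified Lean document; each statement's English description precedes it below -/
import Mathlib

section
/- Let M be a metric space with at least two points, T a total order on M, and s ≥ 1 an integer. Then OR_{M,T}(s) = s if and only if (M,T) admits snakes on s+1 points of arbitrarily large elongation, i.e. for every E > 0 there exist points x_1 <_T x_2 <_T ... <_T x_{s+1} whose diameter a and width b satisfy a/b > E (where the width is 0 interpreted as infinite elongation). -/
open scoped Classical

/-- Length of the path visiting the points of a list in order,
for a distance function `d`. -/
noncomputable def pathLen {α : Type*} (d : α → α → ℝ) : List α → ℝ
  | [] => 0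
  | [_] => 0
  | a :: b :: l => d a b + pathLen d (b :: l)

/-- `lopt d X` : minimal length of a path visiting all points of the finite set `X`. -/
noncomputable def lopt {α : Type*} (d : α → α → ℝ) (X : Finset α) : ℝ :=
  sInf {r : ℝ | ∃ l : List α, l.Nodup ∧ l.toFinset = X ∧ pathLen d l = r}

/-- `lord d T X` : length of the path visiting all points of `X` in the order `T`. -/
noncomputable def lord {α : Type*} (d : α → α → ℝ) (T : LinearOrder α) (X : Finset α) : ℝ :=
  sInf {r : ℝ | ∃ l : List α, l.Nodup ∧ l.toFinset = X ∧ List.Pairwise T.lt l ∧ pathLen d l = r}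

/-- The order ratio function `OR_{M,T}(k)`. -/
noncomputable def ORd {α : Type*} (d : α → α → ℝ) (T : LinearOrder α) (k : ℕ) : ℝ :=
  sSup {r : ℝ | ∃ X : Finset α, 2 ≤ X.card ∧ X.card ≤ k + 1 ∧ r = lord d T X / lopt d X}

/-- A snake in an ordered space: a tuple of points strictly increasing with respect to `T`. -/
def IsSnake {α : Type*} (T : LinearOrder α) {n : ℕ} (x : Fin n → α) : Prop :=
  ∀ i j : Fin n, i < j → T.lt (x i) (x j)

/-- Diameter of a snake. -/
noncomputable def snakeDiam {α : Type*} (d : α → α → ℝ) {n : ℕ} (x : Fin n → α) : ℝ :=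
  sSup {r : ℝ | ∃ i j : Fin n, r = d (x i) (x j)}

/-- Width of a snake: maximal distance between points whose indices have the same parity. -/
noncomputable def snakeWidth {α : Type*} (d : α → α → ℝ) {n : ℕ} (x : Fin n → α) : ℝ :=
  sSup {r : ℝ | ∃ i j : Fin n, i.val % 2 = j.val % 2 ∧ r = d (x i) (x j)}

section ListLemmas
variable {M : Type*} [MetricSpace M]

lemma pathLen_nonneg : ∀ l : List M, 0 ≤ pathLen (fun x y : M => dist x y) l
  | [] => le_refl 0
  | [_] => le_refl 0
  | _ :: b :: l => add_nonneg dist_nonneg (pathLen_nonneg (b :: l))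

lemma pathLen_cons (a b : M) (l : List M) :
    pathLen (fun x y : M => dist x y) (a :: b :: l)
      = dist a b + pathLen (fun x y : M => dist x y) (b :: l) := rfl

lemma pathLen_cons' (a : M) (t : List M) (h : t ≠ []) :
    pathLen (fun x y : M => dist x y) (a :: t)
      = dist a (t.head h) + pathLen (fun x y : M => dist x y) t := by
  cases t with
  | nil => exact absurd rfl h
  | cons b u => rfl

lemma pathLen_tail_le (a : M) (t : List M) :
    pathLen (fun x y : M => dist x y) t ≤ pathLen (fun x y : M => dist x y) (a :: t) := by
  cases t with
  | nil => simp [pathLen]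
  | cons b u => rw [pathLen_cons]; nlinarith [dist_nonneg (x := a) (y := b)]

lemma dist_head_le (a : M) (t : List M) :
    ∀ y ∈ a :: t, dist a y ≤ pathLen (fun x y : M => dist x y) (a :: t) := by
  induction t generalizing a with
  | nil =>
    intro y hy
    simp only [List.mem_singleton, List.mem_cons] at hy
    rcases hy with h | h
    · subst h; simp [pathLen]
    · simp at h
  | cons b u ih =>
    intro y hy
    rcases List.mem_cons.1 hy with h | h
    · subst h; simpa using pathLen_nonneg (y :: b :: u)
    · calc dist a y ≤ dist a b + dist b y := dist_triangle a b y
        _ ≤ dist a b + pathLen (fun x y : M => dist x y) (b :: u) :=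
          add_le_add_right (ih b y h) _
        _ = _ := (pathLen_cons a b u).symm

lemma dist_le_pathLen {l : List M} {x y : M} (hx : x ∈ l) (hy : y ∈ l) :
    dist x y ≤ pathLen (fun x y : M => dist x y) l := by
  induction l with
  | nil => simp at hx
  | cons a t ih =>
    rcases List.mem_cons.1 hx with h | h
    · subst h; exact dist_head_le x t y hy
    · rcases List.mem_cons.1 hy with h' | h'
      · subst h'; rw [dist_comm]; exact dist_head_le y t x (List.mem_cons_of_mem _ h)
      · exact le_trans (ih h h') (pathLen_tail_le a t)

lemma pathLen_ofFn_sum : ∀ {n : ℕ} (x : Fin (n+1) → M),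
    pathLen (fun x y : M => dist x y) (List.ofFn x)
      = ∑ i : Fin n, dist (x i.castSucc) (x i.succ) := by
  intro n
  induction n with
  | zero => intro x; simp [pathLen, List.ofFn_succ]
  | succ n ih =>
    intro x
    have h1 : List.ofFn x = x 0 :: List.ofFn fun i => x i.succ := List.ofFn_succ (f := x)
    have h2 : (List.ofFn fun i : Fin (n+1) => x i.succ)
        = x (Fin.succ 0) :: List.ofFn fun i : Fin n => (x i.succ.succ) :=
      List.ofFn_succ (f := fun i : Fin (n+1) => x i.succ)
    rw [h1, h2, pathLen_cons, ← h2, ih (fun i => x i.succ), Fin.sum_univ_succ]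
    congr 1

end ListLemmas
section OptLemmas
variable {M : Type*} [MetricSpace M]

/-- The set of candidate path lengths for `lopt`. -/
def pathSet (X : Finset M) : Set ℝ :=
  {r : ℝ | ∃ l : List M, l.Nodup ∧ l.toFinset = X ∧ pathLen (fun x y : M => dist x y) l = r}

lemma lopt_def (X : Finset M) : lopt (fun x y : M => dist x y) X = sInf (pathSet X) := rfl

lemma pathSet_nonempty (X : Finset M) : (pathSet X).Nonempty :=
  ⟨_, X.toList, X.nodup_toList, X.toList_toFinset, rfl⟩

lemma pathSet_finite (X : Finset M) : (pathSet X).Finite := by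
  apply Set.Finite.subset
    (Set.Finite.image (fun l => pathLen (fun x y : M => dist x y) l)
      (X.toList.permutations.finite_toSet))
  rintro r ⟨l, hn, ht, hp⟩
  exact ⟨l, by
    simp only [List.mem_permutations]
    exact List.perm_of_nodup_nodup_toFinset_eq hn X.nodup_toList
      (by rw [ht, Finset.toList_toFinset]), hp⟩

lemma lopt_mem (X : Finset M) : lopt (fun x y : M => dist x y) X ∈ pathSet X :=
  Set.Nonempty.csInf_mem (pathSet_nonempty X) (pathSet_finite X)

lemma lopt_le {X : Finset M} {l : List M} (hn : l.Nodup) (ht : l.toFinset = X) :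
    lopt (fun x y : M => dist x y) X ≤ pathLen (fun x y : M => dist x y) l :=
  csInf_le (Set.Finite.bddBelow (pathSet_finite X)) ⟨l, hn, ht, rfl⟩

lemma dist_le_lopt {X : Finset M} {x y : M} (hx : x ∈ X) (hy : y ∈ X) :
    dist x y ≤ lopt (fun x y : M => dist x y) X := by
  apply le_csInf (pathSet_nonempty X)
  rintro r ⟨l, hn, ht, hp⟩
  subst hp
  exact dist_le_pathLen (by rw [← List.mem_toFinset, ht]; exact hx)
    (by rw [← List.mem_toFinset, ht]; exact hy)

lemma lopt_pos {X : Finset M} (h : 2 ≤ X.card) : 0 < lopt (fun x y : M => dist x y) X := by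
  obtain ⟨x, hx, y, hy, hxy⟩ := Finset.one_lt_card.mp h
  exact lt_of_lt_of_le (dist_pos.mpr hxy) (dist_le_lopt hx hy)

lemma lord_eq {T : LinearOrder M} {X : Finset M} {ls : List M} (hn : ls.Nodup)
    (ht : ls.toFinset = X) (hsort : List.Pairwise T.lt ls) :
    lord (fun x y : M => dist x y) T X = pathLen (fun x y : M => dist x y) ls := by
  letI := T
  haveI : IsAntisymm M T.lt := ⟨fun a b h1 h2 => absurd h2 (lt_asymm h1)⟩
  have hset : {r : ℝ | ∃ l : List M, l.Nodup ∧ l.toFinset = X ∧ List.Pairwise T.lt l ∧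
      pathLen (fun x y : M => dist x y) l = r}
      = {pathLen (fun x y : M => dist x y) ls} := by
    ext r
    constructor
    · rintro ⟨l, hn', ht', hsort', hp⟩
      have : l = ls := List.Perm.eq_of_pairwise (fun a b _ _ h1 h2 => absurd h2 (lt_asymm h1)) hsort' hsort
        (List.perm_of_nodup_nodup_toFinset_eq hn' hn (by rw [ht, ht']))
      subst this; exact hp.symm ▸ rfl
    · rintro rfl
      exact ⟨ls, hn, ht, hsort, rfl⟩
  rw [lord, hset, csInf_singleton]

/-- The canonical sorted tuple enumerating a finite set of cardinality `n+1`. -/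
lemma sorted_tuple (T : LinearOrder M) (X : Finset M) {n : ℕ} (h : X.card = n + 1) :
    ∃ x : Fin (n+1) → M, IsSnake T x ∧ Finset.image x Finset.univ = X ∧
      lord (fun x y : M => dist x y) T X
        = ∑ i : Fin n, dist (x i.castSucc) (x i.succ) := by
  letI := T
  set ls := X.sort (· ≤ ·) with hls
  have hlen : ls.length = n + 1 := by rw [hls, Finset.length_sort, h]
  have hsort : List.Pairwise (· < ·) ls := (Finset.sortedLT_sort X).pairwise
  have hnodup : ls.Nodup := Finset.sort_nodup X _
  have htf : ls.toFinset = X := Finset.sort_toFinset X _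
  refine ⟨fun i => ls.get (Fin.cast hlen.symm i), ?_, ?_, ?_⟩
  · intro i j hij
    exact List.pairwise_iff_get.mp hsort _ _ (by simpa using hij)
  · ext a
    simp only [Finset.mem_image, Finset.mem_univ, true_and]
    constructor
    · rintro ⟨i, rfl⟩
      rw [← htf, List.mem_toFinset]
      exact List.mem_iff_get.mpr ⟨_, rfl⟩
    · intro ha
      rw [← htf, List.mem_toFinset] at ha
      obtain ⟨i, hi⟩ := List.mem_iff_get.mp ha
      exact ⟨Fin.cast hlen i, by simpa using hi⟩
  · have hofn : ls = List.ofFn (fun i : Fin (n+1) => ls.get (Fin.cast hlen.symm i)) := by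
      apply List.ext_get (by simp [hlen])
      intro i h1 h2
      rw [List.get_ofFn]
      rfl
    rw [lord_eq hnodup htf hsort]
    conv_lhs => rw [hofn]
    rw [pathLen_ofFn_sum]

end OptLemmas
section TakeLemmas
variable {M : Type*} [MetricSpace M]

lemma pathLen_take_succ : ∀ (k : ℕ) (l : List M) (h : k + 1 < l.length),
    pathLen (fun x y : M => dist x y) (l.take (k+2))
      = pathLen (fun x y : M => dist x y) (l.take (k+1))
        + dist (l.get ⟨k, by omega⟩) (l.get ⟨k+1, h⟩) := by
  intro k
  induction k with
  | zero =>
    intro l h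
    match l, h with
    | a :: b :: t, _ => simp [pathLen]
  | succ k ih =>
    intro l h
    match l, h with
    | a :: b :: u, h =>
      have h' : k + 1 < (b :: u).length := by
        simp only [List.length_cons] at h ⊢; omega
      have e := ih (b :: u) h'
      show pathLen (fun x y : M => dist x y) (a :: (b :: u).take (k+2))
        = pathLen (fun x y : M => dist x y) (a :: (b :: u).take (k+1))
          + dist ((b :: u).get ⟨k, by omega⟩) ((b :: u).get ⟨k+1, h'⟩)
      rw [List.take_succ_cons, List.take_succ_cons, pathLen_cons, pathLen_cons,
        ← List.take_succ_cons, ← List.take_succ_cons, e]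
      ring

lemma pathLen_take_le : ∀ (l : List M) (m : ℕ),
    pathLen (fun x y : M => dist x y) (l.take m) ≤ pathLen (fun x y : M => dist x y) l := by
  intro l
  induction l with
  | nil => intro m; simp [pathLen]
  | cons a t ih =>
    intro m
    cases m with
    | zero => simpa [pathLen] using pathLen_nonneg (a :: t)
    | succ m =>
      rw [List.take_succ_cons]
      cases t with
      | nil => simp
      | cons b u =>
        cases m with
        | zero => simpa [pathLen] using pathLen_nonneg (a :: b :: u)
        | succ m =>
          rw [List.take_succ_cons, pathLen_cons, ← List.take_succ_cons, pathLen_cons]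
          exact add_le_add_right (ih (m+1)) _

lemma dist_get_le_take (l : List M) (i j : ℕ) (hij : i ≤ j) (hj : j < l.length) :
    dist (l.get ⟨i, lt_of_le_of_lt hij hj⟩) (l.get ⟨j, hj⟩)
      + pathLen (fun x y : M => dist x y) (l.take (i+1))
      ≤ pathLen (fun x y : M => dist x y) (l.take (j+1)) := by
  induction j, hij using Nat.le_induction with
  | base => simp
  | succ j hij ih =>
    have hj' : j < l.length := by omega
    have e : pathLen (fun x y : M => dist x y) (l.take (j+2))
        = pathLen (fun x y : M => dist x y) (l.take (j+1))
          + dist (l.get ⟨j, hj'⟩) (l.get ⟨j+1, hj⟩) := pathLen_take_succ j l hj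
    have tri : dist (l.get ⟨i, by omega⟩) (l.get ⟨j+1, hj⟩)
        ≤ dist (l.get ⟨i, by omega⟩) (l.get ⟨j, hj'⟩) + dist (l.get ⟨j, hj'⟩) (l.get ⟨j+1, hj⟩) :=
      dist_triangle _ _ _
    have ih' := ih hj'
    have goal : dist (l.get ⟨i, by omega⟩) (l.get ⟨j+1, hj⟩)
        + pathLen (fun x y : M => dist x y) (l.take (i+1))
        ≤ pathLen (fun x y : M => dist x y) (l.take (j+2)) := by linarith
    exact goal

end TakeLemmas

section SnakeLemmas
variable {M : Type*} [MetricSpace M] {n : ℕ}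

lemma diamSet_finite (x : Fin (n+1) → M) :
    {r : ℝ | ∃ i j : Fin (n+1), r = dist (x i) (x j)}.Finite := by
  apply Set.Finite.subset (Set.finite_range (fun p : Fin (n+1) × Fin (n+1) => dist (x p.1) (x p.2)))
  rintro r ⟨i, j, rfl⟩
  exact ⟨(i, j), rfl⟩

lemma widthSet_finite (x : Fin (n+1) → M) :
    {r : ℝ | ∃ i j : Fin (n+1), i.val % 2 = j.val % 2 ∧ r = dist (x i) (x j)}.Finite := by
  apply Set.Finite.subset (diamSet_finite x)
  rintro r ⟨i, j, _, rfl⟩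
  exact ⟨i, j, rfl⟩

lemma dist_le_snakeDiam (x : Fin (n+1) → M) (i j : Fin (n+1)) :
    dist (x i) (x j) ≤ snakeDiam (fun x y : M => dist x y) x :=
  le_csSup (Set.Finite.bddAbove (diamSet_finite x)) ⟨i, j, rfl⟩

lemma snakeDiam_mem (x : Fin (n+1) → M) :
    ∃ i j : Fin (n+1), snakeDiam (fun x y : M => dist x y) x = dist (x i) (x j) :=
  Set.Nonempty.csSup_mem ⟨dist (x 0) (x 0), Set.mem_setOf.mpr ⟨0, 0, rfl⟩⟩ (diamSet_finite x)

lemma snakeWidth_nonneg (x : Fin (n+1) → M) :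
    0 ≤ snakeWidth (fun x y : M => dist x y) x :=
  le_csSup (Set.Finite.bddAbove (widthSet_finite x)) ⟨0, 0, rfl, (dist_self _).symm⟩

lemma dist_le_snakeWidth (x : Fin (n+1) → M) (i j : Fin (n+1)) (h : i.val % 2 = j.val % 2) :
    dist (x i) (x j) ≤ snakeWidth (fun x y : M => dist x y) x :=
  le_csSup (Set.Finite.bddAbove (widthSet_finite x)) ⟨i, j, h, rfl⟩

lemma snakeWidth_le (x : Fin (n+1) → M) {c : ℝ}
    (h : ∀ i j : Fin (n+1), i.val % 2 = j.val % 2 → dist (x i) (x j) ≤ c) :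
    snakeWidth (fun x y : M => dist x y) x ≤ c := by
  apply csSup_le ⟨(0:ℝ), Set.mem_setOf.mpr ⟨0, 0, rfl, (dist_self _).symm⟩⟩
  rintro r ⟨i, j, hp, rfl⟩
  exact h i j hp

lemma snakeDiam_pos (x : Fin (n+1) → M) (i j : Fin (n+1)) (hij : x i ≠ x j) :
    0 < snakeDiam (fun x y : M => dist x y) x :=
  lt_of_lt_of_le (dist_pos.mpr hij) (dist_le_snakeDiam x i j)

end SnakeLemmas
section MainLemmas
variable {M : Type*} [MetricSpace M]

lemma pathLen_append : ∀ (l1 : List M) (l2 : List M) (h1 : l1 ≠ []) (h2 : l2 ≠ []),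
    pathLen (fun x y : M => dist x y) (l1 ++ l2)
      ≤ pathLen (fun x y : M => dist x y) l1 + dist (l1.getLast h1) (l2.head h2)
        + pathLen (fun x y : M => dist x y) l2
  | [], _, h1, _ => absurd rfl h1
  | [a], l2, _, h2 => by
      rw [List.singleton_append, pathLen_cons' a l2 h2]
      simp [pathLen]
  | a :: b :: t, l2, _, h2 => by
      have hrec := pathLen_append (b :: t) l2 (by simp) h2
      have e1 : pathLen (fun x y : M => dist x y) ((a :: b :: t) ++ l2)
          = dist a b + pathLen (fun x y : M => dist x y) ((b :: t) ++ l2) := rfl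
      rw [e1, pathLen_cons, List.getLast_cons (by simp : (b :: t) ≠ [])]
      linarith

lemma pathLen_ofFn_le {n : ℕ} (f : Fin (n+1) → M) {c : ℝ}
    (h : ∀ i : Fin n, dist (f i.castSucc) (f i.succ) ≤ c) (hc : 0 ≤ c) :
    pathLen (fun x y : M => dist x y) (List.ofFn f) ≤ n * c := by
  rw [pathLen_ofFn_sum]
  calc ∑ i : Fin n, dist (f i.castSucc) (f i.succ) ≤ ∑ _i : Fin n, c :=
        Finset.sum_le_sum (fun i _ => h i)
    _ = n * c := by simp [Finset.sum_const, Finset.card_univ, nsmul_eq_mul]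

lemma lord_le_card {T : LinearOrder M} {X : Finset M} {m : ℕ} (h : X.card = m + 1) :
    lord (fun x y : M => dist x y) T X ≤ m * lopt (fun x y : M => dist x y) X := by
  obtain ⟨x, _, himg, hsum⟩ := sorted_tuple T X h
  rw [hsum]
  have hb : ∀ i : Fin m, dist (x i.castSucc) (x i.succ) ≤ lopt (fun x y : M => dist x y) X := by
    intro i
    apply dist_le_lopt
    · rw [← himg]; exact Finset.mem_image_of_mem x (Finset.mem_univ _)
    · rw [← himg]; exact Finset.mem_image_of_mem x (Finset.mem_univ _)
  calc ∑ i : Fin m, dist (x i.castSucc) (x i.succ)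
      ≤ ∑ _i : Fin m, lopt (fun x y : M => dist x y) X := Finset.sum_le_sum (fun i _ => hb i)
    _ = m * lopt (fun x y : M => dist x y) X := by
        simp [Finset.sum_const, Finset.card_univ, nsmul_eq_mul]

lemma ratio_mem_le {T : LinearOrder M} {s : ℕ} {r : ℝ}
    (hr : r ∈ {r : ℝ | ∃ X : Finset M, 2 ≤ X.card ∧ X.card ≤ s + 1 ∧
      r = lord (fun x y : M => dist x y) T X / lopt (fun x y : M => dist x y) X}) :
    r ≤ (s : ℝ) := by
  obtain ⟨X, hc2, hcs, rfl⟩ := hr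
  obtain ⟨m, hm⟩ : ∃ m, X.card = m + 1 := ⟨X.card - 1, by omega⟩
  have hmle : m ≤ s := by omega
  have hL := lopt_pos hc2
  rw [div_le_iff₀ hL]
  calc lord (fun x y : M => dist x y) T X ≤ m * lopt (fun x y : M => dist x y) X :=
        lord_le_card hm
    _ ≤ s * lopt (fun x y : M => dist x y) X := by
        apply mul_le_mul_of_nonneg_right _ (le_of_lt hL)
        exact_mod_cast hmle

lemma ratio_bddAbove {T : LinearOrder M} {s : ℕ} :
    BddAbove {r : ℝ | ∃ X : Finset M, 2 ≤ X.card ∧ X.card ≤ s + 1 ∧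
      r = lord (fun x y : M => dist x y) T X / lopt (fun x y : M => dist x y) X} :=
  ⟨(s : ℝ), fun _ hr => ratio_mem_le hr⟩

lemma ratio_nonempty {T : LinearOrder M} {s : ℕ} (hs : 1 ≤ s) (h2 : ∃ x y : M, x ≠ y) :
    {r : ℝ | ∃ X : Finset M, 2 ≤ X.card ∧ X.card ≤ s + 1 ∧
      r = lord (fun x y : M => dist x y) T X / lopt (fun x y : M => dist x y) X}.Nonempty := by
  obtain ⟨x, y, hxy⟩ := h2
  refine ⟨_, Set.mem_setOf.mpr ⟨{x, y}, ?_, ?_, rfl⟩⟩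
  · rw [Finset.card_pair hxy]
  · rw [Finset.card_pair hxy]; omega

lemma ORd_le_nat {T : LinearOrder M} {s : ℕ} :
    ORd (fun x y : M => dist x y) T s ≤ (s : ℝ) :=
  Real.sSup_le (fun _ hr => ratio_mem_le hr) (by positivity)

lemma IsSnake.injective {T : LinearOrder M} {n : ℕ} {x : Fin n → M} (h : IsSnake T x) :
    Function.Injective x := by
  letI := T
  intro i j hij
  by_contra hne
  rcases lt_or_gt_of_ne hne with hlt | hlt
  · exact absurd hij (ne_of_lt (h i j hlt))
  · exact absurd hij.symm (ne_of_lt (h j i hlt))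

lemma IsSnake.sorted_ofFn {T : LinearOrder M} {n : ℕ} {x : Fin n → M} (h : IsSnake T x) :
    List.Pairwise T.lt (List.ofFn x) := by
  apply List.pairwise_iff_get.mpr
  intro i j hij
  rw [List.get_ofFn, List.get_ofFn]
  exact h _ _ (by simpa using hij)

lemma IsSnake.nodup_ofFn {T : LinearOrder M} {n : ℕ} {x : Fin n → M} (h : IsSnake T x) :
    (List.ofFn x).Nodup := by
  letI := T
  haveI : IsIrrefl M T.lt := ⟨lt_irrefl⟩
  exact (IsSnake.sorted_ofFn h).nodup

lemma toFinset_ofFn {n : ℕ} [DecidableEq M] (x : Fin n → M) :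
    (List.ofFn x).toFinset = Finset.image x Finset.univ := by
  ext a
  simp [List.mem_toFinset, List.mem_ofFn, Set.mem_range, eq_comm]

lemma snake_lord [DecidableEq M] {T : LinearOrder M} {n : ℕ} {x : Fin (n+1) → M} (h : IsSnake T x) :
    lord (fun x y : M => dist x y) T (Finset.image x Finset.univ)
      = ∑ i : Fin n, dist (x i.castSucc) (x i.succ) := by
  rw [lord_eq (IsSnake.nodup_ofFn h)
    (by
      ext a
      simp only [List.mem_toFinset, List.mem_ofFn, Set.mem_range, Finset.mem_image,
        Finset.mem_univ, true_and]
      )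
    (IsSnake.sorted_ofFn h), pathLen_ofFn_sum]

lemma snake_card [DecidableEq M] {n : ℕ} {x : Fin n → M} (hinj : Function.Injective x) :
    (Finset.image x Finset.univ).card = n := by
  rw [Finset.card_image_of_injective _ hinj, Finset.card_univ, Fintype.card_fin]

end MainLemmas
section Backward
variable {M : Type*} [MetricSpace M]

lemma lord_nonneg {T : LinearOrder M} {X : Finset M} :
    0 ≤ lord (fun x y : M => dist x y) T X := by
  letI := T
  haveI : IsIrrefl M T.lt := ⟨lt_irrefl⟩
  apply le_csInf
  · exact ⟨pathLen (fun x y : M => dist x y) (X.sort (· ≤ ·)),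
      X.sort (· ≤ ·), Finset.sort_nodup X _, Finset.sort_toFinset X _,
      (Finset.sortedLT_sort X).pairwise, rfl⟩
  · rintro r ⟨l, _, _, _, rfl⟩
    exact pathLen_nonneg l

lemma ORd_nonneg {T : LinearOrder M} {s : ℕ} :
    0 ≤ ORd (fun x y : M => dist x y) T s := by
  apply Real.sSup_nonneg
  rintro r ⟨X, hc2, _, rfl⟩
  exact div_nonneg lord_nonneg (le_of_lt (lopt_pos hc2))

lemma snake_edge_lb {s : ℕ} (x : Fin (s+1) → M)
    (i : Fin s) :
    snakeDiam (fun x y : M => dist x y) x - 2 * snakeWidth (fun x y : M => dist x y) x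
      ≤ dist (x i.castSucc) (x i.succ) := by
  obtain ⟨p, q, hpq⟩ := snakeDiam_mem x
  have hb0 := snakeWidth_nonneg x
  by_cases hpar : p.val % 2 = q.val % 2
  · have := dist_le_snakeWidth x p q hpar
    have := dist_nonneg (x := x i.castSucc) (y := x i.succ)
    linarith
  · have hcs : (i.castSucc : Fin (s+1)).val = i.val := Fin.coe_castSucc i
    have hsc : (i.succ : Fin (s+1)).val = i.val + 1 := Fin.val_succ i
    by_cases hpi : p.val % 2 = i.val % 2
    · have h1 : dist (x p) (x i.castSucc) ≤ snakeWidth (fun x y : M => dist x y) x :=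
        dist_le_snakeWidth x p i.castSucc (by omega)
      have h2 : dist (x i.succ) (x q) ≤ snakeWidth (fun x y : M => dist x y) x :=
        dist_le_snakeWidth x i.succ q (by omega)
      have htr : dist (x p) (x q)
          ≤ dist (x p) (x i.castSucc) + dist (x i.castSucc) (x i.succ)
            + dist (x i.succ) (x q) := dist_triangle4 _ _ _ _
      linarith [hpq ▸ htr]
    · have h1 : dist (x q) (x i.castSucc) ≤ snakeWidth (fun x y : M => dist x y) x :=
        dist_le_snakeWidth x q i.castSucc (by omega)
      have h2 : dist (x i.succ) (x p) ≤ snakeWidth (fun x y : M => dist x y) x :=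
        dist_le_snakeWidth x i.succ p (by omega)
      have htr : dist (x q) (x p)
          ≤ dist (x q) (x i.castSucc) + dist (x i.castSucc) (x i.succ)
            + dist (x i.succ) (x p) := dist_triangle4 _ _ _ _
      rw [dist_comm (x q) (x p)] at htr
      linarith [hpq ▸ htr]

lemma ofFn_ne_nil {n : ℕ} (f : Fin (n+1) → M) : List.ofFn f ≠ [] := by
  intro h
  have := List.length_ofFn (f := f)
  rw [h] at this
  simp at this

lemma snake_lopt_ub [DecidableEq M] {T : LinearOrder M} {s : ℕ} (hs : 1 ≤ s) (x : Fin (s+1) → M)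
    (hsnake : IsSnake T x) :
    lopt (fun x y : M => dist x y) (Finset.image x Finset.univ)
      ≤ snakeDiam (fun x y : M => dist x y) x
        + 2 * (s : ℝ) * snakeWidth (fun x y : M => dist x y) x := by
  obtain ⟨k1, hk1⟩ : ∃ k1, (s+1)/2 = k1 + 1 := ⟨(s+1)/2 - 1, by omega⟩
  set a := snakeDiam (fun x y : M => dist x y) x with ha
  set b := snakeWidth (fun x y : M => dist x y) x with hb
  have hb0 : 0 ≤ b := snakeWidth_nonneg x
  have hbe : ∀ i : Fin (s/2 + 1), 2 * i.val < s + 1 := fun i => by have := i.isLt; omega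
  have hbo : ∀ i : Fin (k1 + 1), 2 * (k1 - i.val) + 1 < s + 1 := fun i => by
    have := i.isLt; omega
  set ev : Fin (s/2 + 1) → M := fun i => x ⟨2 * i.val, hbe i⟩ with hev
  set od : Fin (k1 + 1) → M := fun i => x ⟨2 * (k1 - i.val) + 1, hbo i⟩ with hod
  have hinj := hsnake.injective
  have hnodup : (List.ofFn ev ++ List.ofFn od).Nodup := by
    rw [List.nodup_append]
    refine ⟨?_, ?_, ?_⟩
    · rw [List.nodup_ofFn]
      intro i j hij
      have h2 : 2 * i.val = 2 * j.val := by
        have h3 := hinj hij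
        simpa [Fin.mk.injEq] using h3
      exact Fin.ext (by omega)
    · rw [List.nodup_ofFn]
      intro i j hij
      have h2 : 2 * (k1 - i.val) + 1 = 2 * (k1 - j.val) + 1 := by
        have h3 := hinj hij
        simpa [Fin.mk.injEq] using h3
      have hi := i.isLt; have hj := j.isLt
      exact Fin.ext (by omega)
    · intro m hm1 m' hm2 hmm
      subst hmm
      obtain ⟨i, hi⟩ := (List.mem_ofFn).1 hm1
      obtain ⟨j, hj⟩ := (List.mem_ofFn).1 hm2
      have h3 : (⟨2 * i.val, hbe i⟩ : Fin (s+1)) = ⟨2 * (k1 - j.val) + 1, hbo j⟩ :=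
        hinj (hi.trans hj.symm)
      have h4 : 2 * i.val = 2 * (k1 - j.val) + 1 := by simpa [Fin.mk.injEq] using h3
      omega
  have htf : @List.toFinset M (fun a b => Classical.propDecidable (a = b))
      (List.ofFn ev ++ List.ofFn od) = Finset.image x Finset.univ := by
    ext m
    simp only [List.toFinset_append, Finset.mem_union, List.mem_toFinset, List.mem_ofFn,
      Set.mem_range, Finset.mem_image, Finset.mem_univ, true_and]
    constructor
    · rintro (⟨i, hi⟩ | ⟨i, hi⟩)
      · exact ⟨_, hi⟩
      · exact ⟨_, hi⟩
    · rintro ⟨k, hk⟩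
      by_cases hpar : k.val % 2 = 0
      · left
        have hkb : k.val / 2 < s/2 + 1 := by have := k.isLt; omega
        refine ⟨⟨k.val / 2, hkb⟩, ?_⟩
        rw [← hk, hev]
        refine congrArg x (Fin.ext ?_)
        show 2 * (k.val / 2) = k.val
        omega
      · right
        have hle : (k.val - 1) / 2 ≤ k1 := by have := k.isLt; omega
        refine ⟨⟨k1 - (k.val - 1)/2, by omega⟩, ?_⟩
        rw [← hk, hod]
        refine congrArg x (Fin.ext ?_)
        show 2 * (k1 - (k1 - (k.val - 1)/2)) + 1 = k.val
        have := k.isLt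
        omega
  have hne1 : List.ofFn ev ≠ [] := ofFn_ne_nil ev
  have hne2 : List.ofFn od ≠ [] := ofFn_ne_nil od
  have hpl1 : pathLen (fun x y : M => dist x y) (List.ofFn ev) ≤ (s/2 : ℕ) * b := by
    refine pathLen_ofFn_le _ ?_ hb0
    intro i
    rw [hev, hb]
    exact dist_le_snakeWidth x ⟨2 * i.castSucc.val, hbe i.castSucc⟩
      ⟨2 * i.succ.val, hbe i.succ⟩
      (by show (2 * i.castSucc.val) % 2 = (2 * i.succ.val) % 2; omega)
  have hpl2 : pathLen (fun x y : M => dist x y) (List.ofFn od) ≤ (k1 : ℕ) * b := by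
    refine pathLen_ofFn_le _ ?_ hb0
    intro i
    rw [hod, hb]
    exact dist_le_snakeWidth x ⟨2 * (k1 - i.castSucc.val) + 1, hbo i.castSucc⟩
      ⟨2 * (k1 - i.succ.val) + 1, hbo i.succ⟩
      (by show (2 * (k1 - i.castSucc.val) + 1) % 2 = (2 * (k1 - i.succ.val) + 1) % 2; omega)
  have hjun : dist ((List.ofFn ev).getLast hne1) ((List.ofFn od).head hne2) ≤ a := by
    obtain ⟨i, hi⟩ := (List.mem_ofFn).1 (List.getLast_mem hne1)
    obtain ⟨j, hj⟩ := (List.mem_ofFn).1 (List.head_mem hne2)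
    rw [← hi, ← hj, hev, hod, ha]
    exact dist_le_snakeDiam x _ _
  have happ := pathLen_append (List.ofFn ev) (List.ofFn od) hne1 hne2
  have hle := lopt_le hnodup htf
  have hcast1 : ((s/2 : ℕ) : ℝ) ≤ (s : ℝ) := by exact_mod_cast Nat.div_le_self s 2
  have hcast2 : ((k1 : ℕ) : ℝ) ≤ (s : ℝ) := by exact_mod_cast (by omega : k1 ≤ s)
  have hmul1 : ((s/2 : ℕ) : ℝ) * b ≤ (s:ℝ) * b := mul_le_mul_of_nonneg_right hcast1 hb0
  have hmul2 : ((k1 : ℕ) : ℝ) * b ≤ (s:ℝ) * b := mul_le_mul_of_nonneg_right hcast2 hb0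
  linarith

lemma backward_dir {T : LinearOrder M} {s : ℕ} (hs : 1 ≤ s) (h2 : ∃ x y : M, x ≠ y)
    (hsnakes : ∀ E : ℝ, 0 < E → ∃ x : Fin (s + 1) → M, IsSnake T x ∧
        E * snakeWidth (fun x y : M => dist x y) x < snakeDiam (fun x y : M => dist x y) x) :
    ORd (fun x y : M => dist x y) T s = (s : ℝ) := by
  refine le_antisymm ORd_le_nat ?_
  by_contra hlt
  push_neg at hlt
  set ε := (s : ℝ) - ORd (fun x y : M => dist x y) T s with hεdef
  have hε_pos : 0 < ε := by simp only [hεdef]; linarith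
  have hε_le : ε ≤ s := by
    have := ORd_nonneg (M := M) (T := T) (s := s)
    simp only [hεdef]; linarith
  set C : ℝ := 2*(s:ℝ) + 2*(s:ℝ)*(s:ℝ) with hC
  have hC_nonneg : 0 ≤ C := by positivity
  obtain ⟨x, hsnake, hEb⟩ := hsnakes (C/ε + 1) (by positivity)
  set a := snakeDiam (fun x y : M => dist x y) x with ha
  set b := snakeWidth (fun x y : M => dist x y) x with hb
  have hb0 : 0 ≤ b := snakeWidth_nonneg x
  have h01 : (0 : Fin (s+1)) < 1 := by
    rw [Fin.lt_def]
    simp only [Fin.val_zero, Fin.val_one']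
    rw [Nat.mod_eq_of_lt (by omega)]
    omega
  have ha_pos : 0 < a := by
    apply snakeDiam_pos x 0 1
    letI := T
    exact ne_of_lt (hsnake 0 1 h01)
  have hCb : C * b < ε * a := by
    have h1 : ε * ((C/ε + 1) * b) < ε * a := mul_lt_mul_of_pos_left hEb hε_pos
    have h2 : ε * ((C/ε + 1) * b) = (C + ε) * b := by field_simp
    nlinarith
  set X := Finset.image x Finset.univ with hX
  have hcard : X.card = s + 1 := by rw [hX]; exact snake_card hsnake.injective
  have hLpos : 0 < lopt (fun x y : M => dist x y) X := lopt_pos (by omega)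
  have hlord : (s:ℝ) * (a - 2*b) ≤ lord (fun x y : M => dist x y) T X := by
    rw [ha, hb, hX, snake_lord hsnake]
    have := Finset.card_nsmul_le_sum Finset.univ
      (fun i : Fin s => dist (x i.castSucc) (x i.succ)) (a - 2*b)
      (fun i _ => snake_edge_lb x i)
    simpa [Finset.card_univ, nsmul_eq_mul] using this
  have hlopt : lopt (fun x y : M => dist x y) X ≤ a + 2*(s:ℝ)*b := by
    rw [ha, hb, hX]; exact snake_lopt_ub hs x hsnake
  have hmem : lord (fun x y : M => dist x y) T X / lopt (fun x y : M => dist x y) X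
      ∈ {r : ℝ | ∃ Y : Finset M, 2 ≤ Y.card ∧ Y.card ≤ s + 1 ∧
        r = lord (fun x y : M => dist x y) T Y / lopt (fun x y : M => dist x y) Y} :=
    Set.mem_setOf.mpr ⟨X, by omega, by omega, rfl⟩
  have hup := le_csSup (ratio_bddAbove (T := T) (s := s)) hmem
  have hmid : ((s:ℝ) - ε) * (a + 2*(s:ℝ)*b) < (s:ℝ) * (a - 2*b) := by
    have hsml : 2*(s:ℝ)*((s:ℝ)-ε)*b ≤ 2*(s:ℝ)*(s:ℝ)*b := by
      apply mul_le_mul_of_nonneg_right _ hb0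
      nlinarith
    nlinarith
  have hmull : ((s:ℝ) - ε) * lopt (fun x y : M => dist x y) X
      ≤ ((s:ℝ) - ε) * (a + 2*(s:ℝ)*b) :=
    mul_le_mul_of_nonneg_left hlopt (by linarith)
  have hratio : (s:ℝ) - ε < lord (fun x y : M => dist x y) T X
      / lopt (fun x y : M => dist x y) X := by
    rw [lt_div_iff₀ hLpos]
    linarith
  have : (s:ℝ) - ε < ORd (fun x y : M => dist x y) T s := lt_of_lt_of_le hratio hup
  simp only [hεdef] at this
  linarith

end Backward
section Forward
variable {M : Type*} [MetricSpace M]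

set_option maxHeartbeats 2000000 in
lemma forward_dir {T : LinearOrder M} {s : ℕ} (hs : 1 ≤ s) (h2 : ∃ x y : M, x ≠ y)
    (hOR : ORd (fun x y : M => dist x y) T s = (s : ℝ)) :
    ∀ E : ℝ, 0 < E → ∃ x : Fin (s + 1) → M, IsSnake T x ∧
        E * snakeWidth (fun x y : M => dist x y) x
          < snakeDiam (fun x y : M => dist x y) x := by
  intro E hE
  set ε : ℝ := min (1/4) (1/(4*E)) with hεdef
  have hε_pos : 0 < ε := lt_min (by norm_num) (by positivity)
  have hε_le : ε ≤ 1/4 := min_le_left _ _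
  have hεE : ε * E ≤ 1/4 := by
    calc ε * E ≤ (1/(4*E)) * E :=
          mul_le_mul_of_nonneg_right (min_le_right _ _) (le_of_lt hE)
      _ = 1/4 := by field_simp
  have hscast : (1:ℝ) ≤ (s:ℝ) := by exact_mod_cast hs
  -- find a ratio close to s
  have hsup : ((s:ℝ) - ε) < sSup {r : ℝ | ∃ X : Finset M, 2 ≤ X.card ∧ X.card ≤ s + 1 ∧
      r = lord (fun x y : M => dist x y) T X / lopt (fun x y : M => dist x y) X} := by
    have he : sSup {r : ℝ | ∃ X : Finset M, 2 ≤ X.card ∧ X.card ≤ s + 1 ∧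
        r = lord (fun x y : M => dist x y) T X / lopt (fun x y : M => dist x y) X}
        = (s:ℝ) := hOR
    rw [he]
    linarith
  obtain ⟨r, hrmem, hrgt⟩ := exists_lt_of_lt_csSup (ratio_nonempty hs h2) hsup
  obtain ⟨X, hc2, hcs, rfl⟩ := hrmem
  set L := lopt (fun x y : M => dist x y) X with hLdef
  have hLpos : 0 < L := lopt_pos hc2
  have hlord_gt : ((s:ℝ) - ε) * L < lord (fun x y : M => dist x y) T X := by
    rw [hLdef]
    exact (lt_div_iff₀ hLpos).mp hrgt
  -- the set has exactly s+1 points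
  obtain ⟨m, hm⟩ : ∃ m, X.card = m + 1 := ⟨X.card - 1, by omega⟩
  have hms : m = s := by
    have h1 : lord (fun x y : M => dist x y) T X ≤ m * L := by
      rw [hLdef]; exact lord_le_card hm
    have hmges : (s:ℝ) - ε < m := by
      by_contra hcon
      push_neg at hcon
      have := mul_le_mul_of_nonneg_right hcon (le_of_lt hLpos)
      linarith
    have hmges' : s ≤ m := by
      by_contra hcon
      push_neg at hcon
      have : (m:ℝ) + 1 ≤ (s:ℝ) := by exact_mod_cast hcon
      linarith
    omega
  have hm' : X.card = s + 1 := by omega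
  obtain ⟨x, hsnake, himg, hsum⟩ := sorted_tuple T X hm'
  refine ⟨x, hsnake, ?_⟩
  set a := snakeDiam (fun x y : M => dist x y) x with ha
  set b := snakeWidth (fun x y : M => dist x y) x with hb
  have hb0 : 0 ≤ b := snakeWidth_nonneg x
  have h01 : (0 : Fin (s+1)) < 1 := by
    rw [Fin.lt_def]
    simp only [Fin.val_zero, Fin.val_one']
    rw [Nat.mod_eq_of_lt (by omega)]
    omega
  have ha_pos : 0 < a := by
    rw [ha]
    apply snakeDiam_pos x 0 1
    letI := T
    exact ne_of_lt (hsnake 0 1 h01)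
  have hmemX : ∀ i, x i ∈ X := fun i => by
    rw [← himg]; exact Finset.mem_image_of_mem x (Finset.mem_univ _)
  have haL : a ≤ L := by
    obtain ⟨p, q, hpq⟩ := snakeDiam_mem x
    rw [ha, hpq, hLdef]
    exact dist_le_lopt (hmemX p) (hmemX q)
  have hedge_le : ∀ i : Fin s, dist (x i.castSucc) (x i.succ) ≤ a := fun i => by
    rw [ha]; exact dist_le_snakeDiam x _ _
  have hsum_le : lord (fun x y : M => dist x y) T X ≤ (s:ℝ) * a := by
    rw [hsum]
    have := Finset.sum_le_card_nsmul Finset.univ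
      (fun i : Fin s => dist (x i.castSucc) (x i.succ)) a (fun i _ => hedge_le i)
    simpa [Finset.card_univ, nsmul_eq_mul] using this
  have hLa : ((s:ℝ) - ε) * L < (s:ℝ) * a := lt_of_lt_of_le hlord_gt hsum_le
  rw [hsum] at hlord_gt
  -- every consecutive edge is long
  have hedge : ∀ i : Fin s, (1 - ε) * L < dist (x i.castSucc) (x i.succ) := by
    intro i
    have hsplit : dist (x i.castSucc) (x i.succ)
        + ∑ j ∈ Finset.univ.erase i, dist (x j.castSucc) (x j.succ)
        = ∑ j : Fin s, dist (x j.castSucc) (x j.succ) :=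
      Finset.add_sum_erase Finset.univ (fun j : Fin s => dist (x j.castSucc) (x j.succ))
        (Finset.mem_univ i)
    have hrest : ∑ j ∈ Finset.univ.erase i, dist (x j.castSucc) (x j.succ)
        ≤ ((s:ℝ) - 1) * L := by
      have h1 := Finset.sum_le_card_nsmul (Finset.univ.erase i)
        (fun j : Fin s => dist (x j.castSucc) (x j.succ)) L
        (fun j _ => le_trans (hedge_le j) haL)
      have h2 : (Finset.univ.erase i).card = s - 1 := by
        rw [Finset.card_erase_of_mem (Finset.mem_univ i), Finset.card_univ, Fintype.card_fin]
      rw [h2, nsmul_eq_mul] at h1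
      have h3 : ((s - 1 : ℕ) : ℝ) = (s:ℝ) - 1 := by
        rw [Nat.cast_sub hs]; norm_num
      rw [h3] at h1
      exact h1
    linarith
  -- elongation bound chain
  have hL2a : L ≤ 2 * a := by
    by_contra hcon
    push_neg at hcon
    nlinarith [mul_nonneg (sub_nonneg.mpr hscast) (by linarith : (0:ℝ) ≤ L - 2*a),
      mul_le_mul_of_nonneg_right hε_le (le_of_lt hLpos),
      mul_nonneg (sub_nonneg.mpr hscast) (le_of_lt hLpos)]
  have hεL2εa : ε * L ≤ 2 * ε * a := by
    nlinarith [mul_nonneg (le_of_lt hε_pos) (by linarith : (0:ℝ) ≤ 2*a - L)]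
  have hεltL : ε * L < (1 - ε) * L := by
    nlinarith [mul_pos (by linarith : (0:ℝ) < 1 - 2*ε) hLpos]
  have hc12 : ε * L + (1 - ε) * L = L := by ring
  -- the optimal path and positions along it
  obtain ⟨lst, hlnodup, hltf, hlplen⟩ := lopt_mem X
  rw [← hLdef] at hlplen
  have hxin : ∀ i : Fin (s+1), x i ∈ lst := fun i => by
    have hmm := hmemX i
    rw [← hltf] at hmm
    exact (@List.mem_toFinset M (fun a b => Classical.propDecidable (a = b)) lst (x i)).mp hmm
  choose κ hκ using fun i => List.mem_iff_get.mp (hxin i)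
  set u : Fin (s+1) → ℝ :=
    fun i => pathLen (fun x y : M => dist x y) (lst.take ((κ i).val + 1)) with hu
  have hue : ∀ i, u i = pathLen (fun x y : M => dist x y) (lst.take ((κ i).val + 1)) :=
    fun i => by rw [hu]
  have hu0 : ∀ i, 0 ≤ u i := fun i => by rw [hue]; exact pathLen_nonneg _
  have huL : ∀ i, u i ≤ L := fun i => by
    rw [hue, ← hlplen]
    exact pathLen_take_le lst _
  have hdu : ∀ i j : Fin (s+1), dist (x i) (x j) ≤ |u i - u j| := by
    have key : ∀ i j : Fin (s+1), (κ i).val ≤ (κ j).val → dist (x i) (x j) ≤ u j - u i := by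
      intro i j hle
      have h0 := dist_get_le_take lst (κ i).val (κ j).val hle (κ j).isLt
      have e1 : lst.get ⟨(κ i).val, lt_of_le_of_lt hle (κ j).isLt⟩ = x i := hκ i
      have e2 : lst.get ⟨(κ j).val, (κ j).isLt⟩ = x j := hκ j
      rw [e1, e2] at h0
      have e3 := hue i
      have e4 := hue j
      linarith
    intro i j
    rcases le_total (κ i).val (κ j).val with hle | hle
    · calc dist (x i) (x j) ≤ u j - u i := key i j hle
        _ ≤ |u j - u i| := le_abs_self _
        _ = |u i - u j| := abs_sub_comm _ _
    · calc dist (x i) (x j) = dist (x j) (x i) := dist_comm _ _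
        _ ≤ u i - u j := key j i hle
        _ ≤ |u i - u j| := le_abs_self _
  have hstep : ∀ i : Fin s, (1 - ε) * L < |u i.castSucc - u i.succ| :=
    fun i => lt_of_lt_of_le (hedge i) (hdu _ _)
  -- dichotomy: every point is low or high
  have hclass : ∀ i : Fin (s+1), u i ≤ ε * L ∨ (1 - ε) * L ≤ u i := by
    intro i
    by_cases hlow : u i ≤ ε * L
    · exact Or.inl hlow
    right
    by_contra hh
    push_neg at hlow hh
    rcases Nat.lt_or_ge i.val s with hi | hi
    · set j : Fin s := ⟨i.val, hi⟩ with hj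
      have hcs : j.castSucc = i := Fin.ext (by simp [hj])
      have hst := hstep j
      rw [hcs] at hst
      have habs : |u i - u j.succ| < (1 - ε) * L :=
        abs_sub_lt_iff.mpr ⟨by linarith [hu0 j.succ], by linarith [huL j.succ]⟩
      linarith
    · have hieq : i.val = s := by have := i.isLt; omega
      set j : Fin s := ⟨s - 1, by omega⟩ with hj
      have hsc : j.succ = i := Fin.ext (by simp [hj, Fin.val_succ]; omega)
      have hst := hstep j
      rw [hsc] at hst
      have habs : |u j.castSucc - u i| < (1 - ε) * L :=
        abs_sub_lt_iff.mpr ⟨by linarith [huL j.castSucc], by linarith [hu0 j.castSucc]⟩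
      linarith
  -- alternation
  have halt : ∀ i : Fin s, (u i.castSucc ≤ ε * L ↔ ¬ (u i.succ ≤ ε * L)) := by
    intro i
    constructor
    · intro h1 h2
      have hst := hstep i
      have habs : |u i.castSucc - u i.succ| < (1 - ε) * L :=
        abs_sub_lt_iff.mpr ⟨by linarith [hu0 i.succ], by linarith [hu0 i.castSucc]⟩
      linarith
    · intro h2
      by_contra h1
      have hhi1 : (1 - ε) * L ≤ u i.castSucc := (hclass i.castSucc).resolve_left h1
      have hhi2 : (1 - ε) * L ≤ u i.succ := (hclass i.succ).resolve_left h2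
      have hst := hstep i
      have habs : |u i.castSucc - u i.succ| < (1 - ε) * L :=
        abs_sub_lt_iff.mpr ⟨by linarith [huL i.castSucc], by linarith [huL i.succ]⟩
      linarith
  -- parity determines the class
  have claim : ∀ k : ℕ, ∀ hk : k < s + 1,
      (u ⟨k, hk⟩ ≤ ε * L ↔ (k % 2 = 0 ↔ u ⟨0, Nat.succ_pos s⟩ ≤ ε * L)) := by
    intro k
    induction k with
    | zero => intro hk; simp
    | succ k ih =>
      intro hk
      have hk' : k < s + 1 := by omega
      have hks : k < s := by omega
      have halt' := halt ⟨k, hks⟩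
      have hcs : (⟨k, hks⟩ : Fin s).castSucc = (⟨k, hk'⟩ : Fin (s+1)) := rfl
      have hsc : (⟨k, hks⟩ : Fin s).succ = (⟨k+1, hk⟩ : Fin (s+1)) := rfl
      rw [hcs, hsc] at halt'
      have hih := ih hk'
      have hP_iff : (u ⟨k+1, hk⟩ ≤ ε * L) ↔ ¬ (u ⟨k, hk'⟩ ≤ ε * L) := by
        constructor
        · intro hP hQ; exact (halt'.mp hQ) hP
        · intro hnQ; by_contra hnP; exact hnQ (halt'.mpr hnP)
      rw [hP_iff, hih]
      by_cases hA : k % 2 = 0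
      · have hB : ¬ ((k+1) % 2 = 0) := by omega
        simp [hA, hB]
      · have hB : (k+1) % 2 = 0 := by omega
        simp [hA, hB]
  -- width is small
  have hwidth : b ≤ ε * L := by
    rw [hb]
    apply snakeWidth_le
    intro i j hp
    have ci : u i ≤ ε * L ↔ (i.val % 2 = 0 ↔ u ⟨0, Nat.succ_pos s⟩ ≤ ε * L) :=
      claim i.val i.isLt
    have cj : u j ≤ ε * L ↔ (j.val % 2 = 0 ↔ u ⟨0, Nat.succ_pos s⟩ ≤ ε * L) :=
      claim j.val j.isLt
    have hiff : (u i ≤ ε * L) ↔ (u j ≤ ε * L) := by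
      rw [ci, cj, hp]
    by_cases hlow : u i ≤ ε * L
    · have hlow' : u j ≤ ε * L := hiff.mp hlow
      exact le_trans (hdu i j)
        (abs_sub_le_iff.mpr ⟨by linarith [hu0 j], by linarith [hu0 i]⟩)
    · have hlow' : ¬ (u j ≤ ε * L) := fun h => hlow (hiff.mpr h)
      have hhi1 : (1 - ε) * L ≤ u i := (hclass i).resolve_left hlow
      have hhi2 : (1 - ε) * L ≤ u j := (hclass j).resolve_left hlow'
      exact le_trans (hdu i j)
        (abs_sub_le_iff.mpr ⟨by linarith [huL i], by linarith [huL j]⟩)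
  -- conclude
  calc E * b ≤ E * (2 * ε * a) :=
        mul_le_mul_of_nonneg_left (le_trans hwidth hεL2εa) (le_of_lt hE)
    _ ≤ (1/2) * a := by nlinarith [mul_nonneg (sub_nonneg.mpr hεE) (le_of_lt ha_pos)]
    _ < a := by linarith

end Forward

/-- `OR_{M,T}(s) = s` iff `(M,T)` admits snakes on `s+1` points of arbitrarily large elongation
(diameter `> E ·` width for every `E > 0`; width `0` counts as infinite elongation). -/
theorem stmt1 {M : Type*} [MetricSpace M] (h2 : ∃ x y : M, x ≠ y)
    (T : LinearOrder M) (s : ℕ) (hs : 1 ≤ s) :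
    ORd (fun x y : M => dist x y) T s = (s : ℝ) ↔
      ∀ E : ℝ, 0 < E → ∃ x : Fin (s + 1) → M, IsSnake T x ∧
        E * snakeWidth (fun x y : M => dist x y) x <
          snakeDiam (fun x y : M => dist x y) x := by
  constructor
  · intro hOR
    exact forward_dir hs h2 hOR
  · intro hsnakes
    exact backward_dir hs h2 hsnakes
end

section
/- Let M be a metric space and F: ℤ_+ → ℝ_+ a function. Suppose that for every finite subset M' ⊆ M there exists a total order T' on M' with OR_{M',T'}(k) ≤ F(k) for all k ≥ 1. Then there exists a total order T on M with OR_{M,T}(k) ≤ F(k) for all k ≥ 1. -/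
open scoped Classical

open Filter

section Ultra
variable {M : Type*} (Tf : ∀ M' : Finset M, LinearOrder {x // x ∈ M'})
  (U : Ultrafilter (Finset M))

/-- the ultrafilter-limit relation -/
def ultraRel (x y : M) : Prop :=
  {M' : Finset M | ∃ hx : x ∈ M', ∃ hy : y ∈ M', (Tf M').le ⟨x, hx⟩ ⟨y, hy⟩} ∈ U

lemma ultraRel_refl (hU : ↑U ≤ (atTop : Filter (Finset M))) (x : M) : ultraRel Tf U x x := by
  refine U.toFilter.mem_of_superset (hU (mem_atTop ({x} : Finset M))) ?_
  intro M' hM'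
  simp only [Set.mem_setOf_eq] at hM' ⊢
  have hx : x ∈ M' := Finset.singleton_subset_iff.mp hM'
  exact ⟨hx, hx, le_refl _⟩

lemma ultraRel_trans (x y z : M) (h1 : ultraRel Tf U x y) (h2 : ultraRel Tf U y z) :
    ultraRel Tf U x z := by
  refine U.toFilter.mem_of_superset (Filter.inter_mem h1 h2) ?_
  rintro M' ⟨⟨hx, hy, hxy⟩, ⟨hy', hz, hyz⟩⟩
  exact ⟨hx, hz, le_trans hxy hyz⟩

lemma ultraRel_antisymm (x y : M) (h1 : ultraRel Tf U x y) (h2 : ultraRel Tf U y x) :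
    x = y := by
  obtain ⟨M', ⟨hx, hy, hxy⟩, ⟨hy', hx', hyx⟩⟩ := Filter.nonempty_of_mem (Filter.inter_mem h1 h2)
  exact congrArg Subtype.val (le_antisymm hxy hyx)

lemma ultraRel_total (hU : ↑U ≤ (atTop : Filter (Finset M))) (x y : M) :
    ultraRel Tf U x y ∨ ultraRel Tf U y x := by
  unfold ultraRel
  rw [← Ultrafilter.union_mem_iff]
  refine U.toFilter.mem_of_superset (hU (mem_atTop ({x, y} : Finset M))) ?_
  intro M' hM'
  have hx : x ∈ M' := hM' (by simp)
  have hy : y ∈ M' := hM' (by simp)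
  rcases le_total ((⟨x, hx⟩ : {a // a ∈ M'}) : {a // a ∈ M'}) ⟨y, hy⟩ with hc | hc
  · exact Or.inl ⟨hx, hy, hc⟩
  · exact Or.inr ⟨hy, hx, hc⟩

/-- the ultrafilter-limit linear order -/
noncomputable def ultraLO (hU : ↑U ≤ (atTop : Filter (Finset M))) : LinearOrder M where
  le := ultraRel Tf U
  lt := fun a b => ultraRel Tf U a b ∧ ¬ ultraRel Tf U b a
  le_refl := ultraRel_refl Tf U hU
  le_trans := ultraRel_trans Tf U
  lt_iff_le_not_ge := fun _ _ => Iff.rfl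
  le_antisymm := ultraRel_antisymm Tf U
  le_total := ultraRel_total Tf U hU
  toDecidableLE := Classical.decRel _

/-- on any finite set `X`, the limit order agrees with `Tf M'` for some `M' ⊇ X` -/
lemma exists_agree (hU : ↑U ≤ (atTop : Filter (Finset M))) (X : Finset M) :
    ∃ M' : Finset M, (∀ x ∈ X, x ∈ M') ∧
      ∀ a b : {x // x ∈ M'}, a.val ∈ X → b.val ∈ X →
        (ultraRel Tf U a.val b.val ↔ (Tf M').le a b) := by
  have key : ∀ p : M × M, {M' : Finset M | ∀ (ha : p.1 ∈ M') (hb : p.2 ∈ M'),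
      (ultraRel Tf U p.1 p.2 ↔ (Tf M').le ⟨p.1, ha⟩ ⟨p.2, hb⟩)} ∈ U := by
    rintro ⟨x, y⟩
    by_cases hxy : ultraRel Tf U x y
    · refine U.toFilter.mem_of_superset hxy ?_
      rintro M' ⟨hx, hy, hle⟩ ha hb
      exact ⟨fun _ => hle, fun _ => hxy⟩
    · have hyx : ultraRel Tf U y x := (ultraRel_total Tf U hU x y).resolve_left hxy
      have hne : x ≠ y := fun he => hxy (he ▸ ultraRel_refl Tf U hU x)
      refine U.toFilter.mem_of_superset hyx ?_
      rintro M' ⟨hy, hx, hle⟩ ha hb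
      constructor
      · intro hc; exact absurd hc hxy
      · intro hc
        exact absurd (congrArg Subtype.val (le_antisymm hc hle)) hne
  have hall : (⋂ p ∈ (X ×ˢ X : Finset (M × M)),
      {M' : Finset M | ∀ (ha : p.1 ∈ M') (hb : p.2 ∈ M'),
        (ultraRel Tf U p.1 p.2 ↔ (Tf M').le ⟨p.1, ha⟩ ⟨p.2, hb⟩)}) ∈ U :=
    (Filter.biInter_finset_mem _).mpr (fun p _ => key p)
  have hXU : {M' : Finset M | X ≤ M'} ∈ U := hU (mem_atTop X)
  obtain ⟨M', hM1, hM2⟩ := Filter.nonempty_of_mem (Filter.inter_mem hXU hall)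
  refine ⟨M', fun x hx => hM1 hx, ?_⟩
  intro a b ha hb
  have h3 := Set.mem_iInter₂.mp hM2 (a.val, b.val) (Finset.mem_product.mpr ⟨ha, hb⟩)
  exact h3 a.2 b.2

end Ultra

section Transfer
variable {M : Type*} [MetricSpace M] (M' : Finset M) (X : Finset M)

lemma pathLen_map {α β : Type*} (d : β → β → ℝ) (f : α → β) :
    ∀ l : List α, pathLen d (l.map f) = pathLen (fun a b => d (f a) (f b)) l
  | [] => rfl
  | [a] => rfl
  | a :: b :: l => by
      have ih := pathLen_map d f (b :: l)
      simp only [List.map_cons] at ih ⊢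
      rw [pathLen, pathLen, ih]

/-- transfer of path-existence statements from `M` to the subtype of `M'` -/
lemma set_transfer_iff (inst1 : DecidableEq M) (inst2 : DecidableEq {x // x ∈ M'})
    (instp : DecidablePred (· ∈ M'))
    (hX : ∀ x ∈ X, x ∈ M') (P : List M → Prop) (P' : List {x // x ∈ M'} → Prop)
    (hP : ∀ l' : List {x // x ∈ M'}, (∀ a ∈ l', a.val ∈ X) →
      (P (l'.map Subtype.val) ↔ P' l')) (r : ℝ) :
    (∃ l : List M, l.Nodup ∧ @List.toFinset _ inst1 l = X ∧ P l ∧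
        pathLen (fun a b : M => dist a b) l = r)
    ↔ (∃ l' : List {x // x ∈ M'}, l'.Nodup ∧
        @List.toFinset _ inst2 l' = @Finset.subtype _ _ instp X ∧ P' l' ∧
        pathLen (fun a b : {x // x ∈ M'} => dist a b) l' = r) := by
  have hpl : ∀ l' : List {x // x ∈ M'},
      pathLen (fun a b : M => dist a b) (l'.map Subtype.val)
        = pathLen (fun a b : {x // x ∈ M'} => dist a b) l' := by
    intro l'
    rw [pathLen_map]
    congr 1
  constructor
  · rintro ⟨l, hnd, htf, hPl, hlen⟩
    have hmem : ∀ x ∈ l, x ∈ M' := fun x hx => hX x (htf ▸ List.mem_toFinset.mpr hx)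
    have hmap : (l.pmap Subtype.mk hmem).map Subtype.val = l := by
      rw [List.map_pmap]
      simp
    have hmem2 : ∀ a ∈ l.pmap Subtype.mk hmem, a.val ∈ X := by
      intro a ha
      have : a.val ∈ (l.pmap Subtype.mk hmem).map Subtype.val := List.mem_map_of_mem ha
      rw [hmap] at this
      exact htf ▸ List.mem_toFinset.mpr this
    have htf2 : @List.toFinset _ inst2 (l.pmap Subtype.mk hmem) = @Finset.subtype _ _ instp X := by
      ext a
      rw [List.mem_toFinset, Finset.mem_subtype,
        ← List.mem_map_of_injective (f := Subtype.val) Subtype.val_injective, hmap, ← htf,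
        List.mem_toFinset]
    refine ⟨l.pmap Subtype.mk hmem, ?_, htf2, ?_, ?_⟩
    · exact List.Nodup.of_map Subtype.val (by rw [hmap]; exact hnd)
    · exact (hP _ hmem2).mp (by rw [hmap]; exact hPl)
    · rw [← hpl, hmap]
      exact hlen
  · rintro ⟨l', hnd, htf, hPl, hlen⟩
    have hmem : ∀ a ∈ l', a.val ∈ X := fun a hal =>
      Finset.mem_subtype.mp (htf ▸ List.mem_toFinset.mpr hal)
    refine ⟨l'.map Subtype.val, hnd.map Subtype.val_injective, ?_, (hP _ hmem).mpr hPl,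
      by rw [hpl]; exact hlen⟩
    ext a
    simp only [List.mem_toFinset, List.mem_map]
    constructor
    · rintro ⟨b, hb, rfl⟩
      exact hmem b hb
    · intro ha
      refine ⟨⟨a, hX a ha⟩, ?_, rfl⟩
      have h4 : (⟨a, hX a ha⟩ : {x // x ∈ M'}) ∈ @Finset.subtype _ _ instp X :=
        Finset.mem_subtype.mpr ha
      exact List.mem_toFinset.mp (htf ▸ h4)

lemma lopt_transfer (hX : ∀ x ∈ X, x ∈ M') :
    lopt (fun x y : M => dist x y) X
      = lopt (fun a b : {x // x ∈ M'} => dist a b) (X.subtype (· ∈ M')) := by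
  unfold lopt
  congr 1
  ext r
  simp only [Set.mem_setOf_eq]
  constructor
  · rintro ⟨l, h1, h2, h3⟩
    obtain ⟨l', a1, a2, _, a4⟩ := (set_transfer_iff M' X _ _ _ hX (fun _ => True) (fun _ => True)
      (fun _ _ => Iff.rfl) r).mp ⟨l, h1, h2, trivial, h3⟩
    exact ⟨l', a1, a2, a4⟩
  · rintro ⟨l', h1, h2, h3⟩
    obtain ⟨l, a1, a2, _, a4⟩ := (set_transfer_iff M' X _ _ _ hX (fun _ => True) (fun _ => True)
      (fun _ _ => Iff.rfl) r).mpr ⟨l', h1, h2, trivial, h3⟩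
    exact ⟨l, a1, a2, a4⟩

lemma lord_transfer (hX : ∀ x ∈ X, x ∈ M')
    (T : LinearOrder M) (T₂ : LinearOrder {x // x ∈ M'})
    (hag : ∀ a b : {x // x ∈ M'}, a.val ∈ X → b.val ∈ X → (T.le a.val b.val ↔ T₂.le a b)) :
    lord (fun x y : M => dist x y) T X
      = lord (fun a b : {x // x ∈ M'} => dist a b) T₂ (X.subtype (· ∈ M')) := by
  have hsorted : ∀ l' : List {x // x ∈ M'}, (∀ a ∈ l', a.val ∈ X) →
      (List.Pairwise T.lt (l'.map Subtype.val) ↔ List.Pairwise T₂.lt l') := by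
    intro l' hmem
    have haglt : ∀ a b : {x // x ∈ M'}, a ∈ l' → b ∈ l' → (T.lt a.val b.val ↔ T₂.lt a b) := by
      intro a b ha hb
      rw [@lt_iff_le_not_ge _ T.toPreorder, @lt_iff_le_not_ge _ T₂.toPreorder,
        hag a b (hmem a ha) (hmem b hb), hag b a (hmem b hb) (hmem a ha)]
    constructor
    · intro hp
      exact (List.pairwise_map.mp hp).imp_of_mem (fun ha hb hr => (haglt _ _ ha hb).mp hr)
    · intro hp
      exact List.pairwise_map.mpr (hp.imp_of_mem (fun ha hb hr => (haglt _ _ ha hb).mpr hr))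
  unfold lord
  congr 1
  ext r
  simp only [Set.mem_setOf_eq]
  exact set_transfer_iff M' X _ _ _ hX (List.Pairwise T.lt) (List.Pairwise T₂.lt) hsorted r

end Transfer

lemma bddAbove_ORdSet {α : Type*} [Fintype α] (d : α → α → ℝ) (T : LinearOrder α) (k : ℕ) :
    BddAbove {r : ℝ | ∃ X : Finset α, 2 ≤ X.card ∧ X.card ≤ k + 1 ∧ r = lord d T X / lopt d X} := by
  apply Set.Finite.bddAbove
  apply Set.Finite.subset (Set.finite_range (fun X : Finset α => lord d T X / lopt d X))
  rintro r ⟨X, _, _, rfl⟩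
  exact ⟨X, rfl⟩

/-- Compactness for orders: if every finite subset `M'` of `M` admits an order whose
order ratio function is bounded by `F`, then so does `M` itself. -/
theorem stmt5 {M : Type*} [MetricSpace M] (F : ℕ → ℝ) (hF : ∀ k : ℕ, 0 ≤ F k)
    (h : ∀ M' : Finset M, ∃ T' : LinearOrder {x // x ∈ M'},
      ∀ k : ℕ, 1 ≤ k →
        ORd (fun a b : {x // x ∈ M'} => dist a b) T' k ≤ F k) :
    ∃ T : LinearOrder M, ∀ k : ℕ, 1 ≤ k →
      ORd (fun x y : M => dist x y) T k ≤ F k := by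
  classical
  let Tf : ∀ M' : Finset M, LinearOrder {x // x ∈ M'} := fun M' => (h M').choose
  have hTf : ∀ M' : Finset M, ∀ k : ℕ, 1 ≤ k →
      ORd (fun a b : {x // x ∈ M'} => dist a b) (Tf M') k ≤ F k := fun M' => (h M').choose_spec
  let U : Ultrafilter (Finset M) := Ultrafilter.of atTop
  have hU : ↑U ≤ (atTop : Filter (Finset M)) := Ultrafilter.of_le _
  refine ⟨ultraLO Tf U hU, ?_⟩
  intro k hk
  refine Real.sSup_le ?_ (hF k)
  rintro r ⟨X, hX2, hXk, rfl⟩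
  obtain ⟨M', hXM', hag⟩ := exists_agree Tf U hU X
  have hcard : (X.subtype (· ∈ M')).card = X.card := by
    rw [Finset.card_subtype, Finset.filter_true_of_mem hXM']
  have hlord : lord (fun x y : M => dist x y) (ultraLO Tf U hU) X
      = lord (fun a b : {x // x ∈ M'} => dist a b) (Tf M') (X.subtype (· ∈ M')) := by
    have := lord_transfer M' X hXM' (ultraLO Tf U hU) (Tf M') hag
    convert this using 3
  have hlopt : lopt (fun x y : M => dist x y) X
      = lopt (fun a b : {x // x ∈ M'} => dist a b) (X.subtype (· ∈ M')) := by
    have := lopt_transfer M' X hXM'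
    convert this using 3
  rw [hlord, hlopt]
  have hmem : lord (fun a b : {x // x ∈ M'} => dist a b) (Tf M') (X.subtype (· ∈ M'))
        / lopt (fun a b : {x // x ∈ M'} => dist a b) (X.subtype (· ∈ M'))
      ∈ {r : ℝ | ∃ X' : Finset {x // x ∈ M'}, 2 ≤ X'.card ∧ X'.card ≤ k + 1 ∧
          r = lord (fun a b : {x // x ∈ M'} => dist a b) (Tf M') X'
            / lopt (fun a b : {x // x ∈ M'} => dist a b) X'} :=
    ⟨X.subtype (· ∈ M'), by rw [hcard]; exact hX2, by rw [hcard]; exact hXk, rfl⟩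
  exact le_trans (le_csSup (bddAbove_ORdSet _ _ _) hmem) (hTf M' k hk)
end

section
/- Let M be a set and let 𝒜 be a family of subsets of M such that any two sets A_1, A_2 ∈ 𝒜 are either disjoint or one is contained in the other. Then there exists a total order T on M such that every set of 𝒜 is convex with respect to T. -/
namespace Stmt6Helper

variable {M : Type*}

/-- Union of all sets of `𝒜` containing `x` but not `y`. -/
def UU (𝒜 : Set (Set M)) (x y : M) : Set M := {m | ∃ A ∈ 𝒜, x ∈ A ∧ y ∉ A ∧ m ∈ A}

/-- Union of all sets of `𝒜` separating `x` from `y`. -/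
def SepU (𝒜 : Set (Set M)) (x y : M) : Set M := UU 𝒜 x y ∪ UU 𝒜 y x

/-- The laminar hypothesis. -/
def Lam (𝒜 : Set (Set M)) : Prop :=
  ∀ A1 ∈ 𝒜, ∀ A2 ∈ 𝒜, A1 ∩ A2 = ∅ ∨ A1 ⊆ A2 ∨ A2 ⊆ A1

theorem lam_sub {𝒜 : Set (Set M)} (h : Lam 𝒜) {A B : Set M} {p q : M}
    (hA : A ∈ 𝒜) (hB : B ∈ 𝒜) (hpA : p ∈ A) (hpB : p ∈ B) (hqB : q ∈ B) (hqA : q ∉ A) :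
    A ⊆ B := by
  rcases h A hA B hB with he | hs | hs
  · exact absurd (he ▸ Set.mem_inter hpA hpB) (Set.notMem_empty p)
  · exact hs
  · exact absurd (hs hqB) hqA

theorem mem_UU_self {𝒜 : Set (Set M)} {A : Set M} {x y : M}
    (hA : A ∈ 𝒜) (hx : x ∈ A) (hy : y ∉ A) : x ∈ UU 𝒜 x y :=
  ⟨A, hA, hx, hy, hx⟩

theorem UU_disjoint {𝒜 : Set (Set M)} (h : Lam 𝒜) {x y m : M}
    (h1 : m ∈ UU 𝒜 x y) (h2 : m ∈ UU 𝒜 y x) : False := by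
  obtain ⟨A, hA, hxA, hyA, hmA⟩ := h1
  obtain ⟨B, hB, hyB, hxB, hmB⟩ := h2
  exact hxB (lam_sub h hA hB hmA hmB hyB hyA hxA)

theorem SepU_comm (𝒜 : Set (Set M)) (x y : M) : SepU 𝒜 x y = SepU 𝒜 y x :=
  Set.union_comm _ _

theorem SepU_empty_iff {𝒜 : Set (Set M)} {x y : M} :
    ¬(SepU 𝒜 x y).Nonempty ↔ ∀ A ∈ 𝒜, (x ∈ A ↔ y ∈ A) := by
  constructor
  · intro he A hA
    constructor
    · intro hx
      by_contra hy
      exact he ⟨x, Or.inl ⟨A, hA, hx, hy, hx⟩⟩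
    · intro hy
      by_contra hx
      exact he ⟨y, Or.inr ⟨A, hA, hy, hx, hy⟩⟩
  · rintro hiff ⟨m, hm | hm⟩
    · obtain ⟨A, hA, hx, hy, _⟩ := hm
      exact hy ((hiff A hA).mp hx)
    · obtain ⟨A, hA, hy, hx, _⟩ := hm
      exact hx ((hiff A hA).mpr hy)

noncomputable def mn (𝒜 : Set (Set M)) (x y : M) (h : (SepU 𝒜 x y).Nonempty) : M :=
  (WellOrderingRel.isWellOrder (α := M)).toIsWellFounded.wf.min (SepU 𝒜 x y) h

theorem mn_mem {𝒜 : Set (Set M)} {x y : M} (h : (SepU 𝒜 x y).Nonempty) :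
    mn 𝒜 x y h ∈ SepU 𝒜 x y :=
  WellFounded.min_mem _ _ _

theorem mn_min {𝒜 : Set (Set M)} {x y : M} (h : (SepU 𝒜 x y).Nonempty) {a : M}
    (ha : a ∈ SepU 𝒜 x y) : ¬ WellOrderingRel a (mn 𝒜 x y h) :=
  WellFounded.not_lt_min _ _ ha

theorem mn_congr {𝒜 : Set (Set M)} {x y x' y' : M}
    (hS : SepU 𝒜 x y = SepU 𝒜 x' y') (h : (SepU 𝒜 x y).Nonempty)
    (h' : (SepU 𝒜 x' y').Nonempty) : mn 𝒜 x y h = mn 𝒜 x' y' h' := by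
  unfold mn
  congr 1

theorem w_eq {a b : M} (h1 : ¬ WellOrderingRel a b) (h2 : ¬ WellOrderingRel b a) : a = b :=
  ((trichotomous_of WellOrderingRel a b).resolve_left h1).resolve_right h2

open Classical in
/-- The candidate strict total order. -/
noncomputable def ltr (𝒜 : Set (Set M)) (x y : M) : Prop :=
  x ≠ y ∧ if h : (SepU 𝒜 x y).Nonempty then mn 𝒜 x y h ∈ UU 𝒜 x y
    else WellOrderingRel x y

theorem ltr_pos {𝒜 : Set (Set M)} {x y : M} (h : (SepU 𝒜 x y).Nonempty) :
    ltr 𝒜 x y ↔ (x ≠ y ∧ mn 𝒜 x y h ∈ UU 𝒜 x y) := by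
  unfold ltr
  rw [dif_pos h]

theorem ltr_neg {𝒜 : Set (Set M)} {x y : M} (h : ¬ (SepU 𝒜 x y).Nonempty) :
    ltr 𝒜 x y ↔ (x ≠ y ∧ WellOrderingRel x y) := by
  unfold ltr
  rw [dif_neg h]

theorem ltr_total {𝒜 : Set (Set M)} (hlam : Lam 𝒜) {x y : M} (hne : x ≠ y) :
    ltr 𝒜 x y ↔ ¬ ltr 𝒜 y x := by
  by_cases h : (SepU 𝒜 x y).Nonempty
  · have h' : (SepU 𝒜 y x).Nonempty := (SepU_comm 𝒜 x y) ▸ h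
    have hmn : mn 𝒜 x y h = mn 𝒜 y x h' := mn_congr (SepU_comm 𝒜 x y) h h'
    rw [ltr_pos h, ltr_pos h']
    constructor
    · rintro ⟨-, hm⟩ ⟨-, hm'⟩
      exact UU_disjoint hlam hm (hmn ▸ hm')
    · intro hn
      refine ⟨hne, ?_⟩
      rcases mn_mem h with hm | hm
      · exact hm
      · exact absurd ⟨hne.symm, hmn ▸ hm⟩ hn
  · have h' : ¬ (SepU 𝒜 y x).Nonempty := (SepU_comm 𝒜 x y) ▸ h
    rw [ltr_neg h, ltr_neg h']
    constructor
    · rintro ⟨-, hw⟩ ⟨-, hw'⟩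
      exact absurd hw (asymm_of WellOrderingRel hw')
    · intro hn
      refine ⟨hne, ?_⟩
      rcases trichotomous_of WellOrderingRel x y with hw | he | hw
      · exact hw
      · exact absurd he hne
      · exact absurd ⟨hne.symm, hw⟩ hn

theorem ltr_asymm {𝒜 : Set (Set M)} (hlam : Lam 𝒜) {x y : M}
    (h1 : ltr 𝒜 x y) (h2 : ltr 𝒜 y x) : False :=
  ((ltr_total hlam h1.1).mp h1) h2

/-- Key cycle-impossibility lemma, under the assumption that `r1` (the min for the
pair `(x,y)`) is the smallest of the three mins. -/
theorem cyc_aux {𝒜 : Set (Set M)} (hlam : Lam 𝒜) {x y z : M}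
    (n1 : (SepU 𝒜 x y).Nonempty) (n2 : (SepU 𝒜 y z).Nonempty) (n3 : (SepU 𝒜 z x).Nonempty)
    (h1 : mn 𝒜 x y n1 ∈ UU 𝒜 x y) (h2 : mn 𝒜 y z n2 ∈ UU 𝒜 y z)
    (h3 : mn 𝒜 z x n3 ∈ UU 𝒜 z x)
    (m12 : ¬ WellOrderingRel (mn 𝒜 y z n2) (mn 𝒜 x y n1))
    (m13 : ¬ WellOrderingRel (mn 𝒜 z x n3) (mn 𝒜 x y n1)) : False := by
  set r1 := mn 𝒜 x y n1 with hr1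
  set r2 := mn 𝒜 y z n2 with hr2
  set r3 := mn 𝒜 z x n3 with hr3
  obtain ⟨C, hC, hxC, hyC, hrC⟩ := h1
  obtain ⟨B, hB, hyB, hzB, hrB⟩ := h2
  obtain ⟨D, hD, hzD, hxD, hrD⟩ := h3
  -- First: r1 = r2.
  have hr12 : r1 = r2 := by
    by_cases hzC : z ∈ C
    · -- C contains z, not y: so r1 ∈ SepU y z, hence r2 ≤ r1, so r1 = r2.
      have : r1 ∈ SepU 𝒜 y z := Or.inr ⟨C, hC, hzC, hyC, hrC⟩
      exact w_eq (mn_min n2 this) m12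
    · -- C contains x, not z: so r1 ∈ SepU z x, hence r3 ≤ r1, so r1 = r3.
      have : r1 ∈ SepU 𝒜 z x := Or.inr ⟨C, hC, hxC, hzC, hrC⟩
      have hr13 : r1 = r3 := w_eq (mn_min n3 this) m13
      -- then r1 ∈ C ∩ D, x ∈ C \ D, so D ⊆ C, so z ∈ C: contradiction.
      have hD_sub : D ⊆ C := lam_sub hlam hD hC (hr13 ▸ hrD) hrC hxC hxD
      exact absurd (hD_sub hzD) hzC
  -- r1 = r2 ∈ B ∩ C, y ∈ B \ C, so C ⊆ B, so x ∈ B.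
  have hC_sub : C ⊆ B := lam_sub hlam hC hB hrC (hr12 ▸ hrB) hyB hyC
  have hxB : x ∈ B := hC_sub hxC
  -- B contains x, not z: so r2 ∈ SepU z x, hence r3 ≤ r2 = r1, so r1 = r3.
  have : r2 ∈ SepU 𝒜 z x := Or.inr ⟨B, hB, hxB, hzB, hrB⟩
  have m23 : ¬ WellOrderingRel r2 r3 := mn_min n3 this
  have m13' : ¬ WellOrderingRel r1 r3 := by rw [hr12]; exact m23
  have hr13 : r1 = r3 := w_eq m13' m13
  -- r1 ∈ B ∩ D, x ∈ B \ D, z ∈ D \ B: contradiction with laminarity.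
  have : B ⊆ D := lam_sub hlam hB hD (hr12 ▸ hrB) (hr13 ▸ hrD) hzD hzB
  exact hxD (this hxB)

theorem no_cycle {𝒜 : Set (Set M)} (hlam : Lam 𝒜) {x y z : M}
    (n1 : (SepU 𝒜 x y).Nonempty) (n2 : (SepU 𝒜 y z).Nonempty) (n3 : (SepU 𝒜 z x).Nonempty)
    (h1 : mn 𝒜 x y n1 ∈ UU 𝒜 x y) (h2 : mn 𝒜 y z n2 ∈ UU 𝒜 y z)
    (h3 : mn 𝒜 z x n3 ∈ UU 𝒜 z x) : False := by
  set r1 := mn 𝒜 x y n1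
  set r2 := mn 𝒜 y z n2
  set r3 := mn 𝒜 z x n3
  by_cases h21 : WellOrderingRel r2 r1
  · by_cases h32 : WellOrderingRel r3 r2
    · -- r3 smallest
      have h31 : WellOrderingRel r3 r1 := trans_of WellOrderingRel h32 h21
      exact cyc_aux hlam n3 n1 n2 h3 h1 h2 (asymm_of WellOrderingRel h31)
        (asymm_of WellOrderingRel h32)
    · -- r2 smallest
      exact cyc_aux hlam n2 n3 n1 h2 h3 h1 h32 (asymm_of WellOrderingRel h21)
  · by_cases h31 : WellOrderingRel r3 r1
    · -- r3 smallest
      have h23 : ¬ WellOrderingRel r2 r3 := fun hw => h21 (trans_of WellOrderingRel hw h31)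
      exact cyc_aux hlam n3 n1 n2 h3 h1 h2 (asymm_of WellOrderingRel h31) h23
    · -- r1 smallest
      exact cyc_aux hlam n1 n2 n3 h1 h2 h3 h21 h31

theorem UU_congr {𝒜 : Set (Set M)} {x y z : M}
    (he : ∀ A ∈ 𝒜, (x ∈ A ↔ y ∈ A)) : UU 𝒜 x z = UU 𝒜 y z := by
  ext m
  constructor
  · rintro ⟨A, hA, hx, hz, hm⟩
    exact ⟨A, hA, (he A hA).mp hx, hz, hm⟩
  · rintro ⟨A, hA, hy, hz, hm⟩
    exact ⟨A, hA, (he A hA).mpr hy, hz, hm⟩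

theorem UU_congr' {𝒜 : Set (Set M)} {x y z : M}
    (he : ∀ A ∈ 𝒜, (x ∈ A ↔ y ∈ A)) : UU 𝒜 z x = UU 𝒜 z y := by
  ext m
  constructor
  · rintro ⟨A, hA, hz, hx, hm⟩
    exact ⟨A, hA, hz, fun hy => hx ((he A hA).mpr hy), hm⟩
  · rintro ⟨A, hA, hz, hy, hm⟩
    exact ⟨A, hA, hz, fun hx => hy ((he A hA).mp hx), hm⟩

theorem ltr_trans {𝒜 : Set (Set M)} (hlam : Lam 𝒜) {x y z : M}
    (hxy : ltr 𝒜 x y) (hyz : ltr 𝒜 y z) : ltr 𝒜 x z := by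
  have hnexz : x ≠ z := by
    rintro rfl
    exact ltr_asymm hlam hxy hyz
  by_cases n1 : (SepU 𝒜 x y).Nonempty
  · by_cases n2 : (SepU 𝒜 y z).Nonempty
    · -- both pairs separated
      have h1 : mn 𝒜 x y n1 ∈ UU 𝒜 x y := ((ltr_pos n1).mp hxy).2
      have h2 : mn 𝒜 y z n2 ∈ UU 𝒜 y z := ((ltr_pos n2).mp hyz).2
      -- first, SepU x z is nonempty
      have n3 : (SepU 𝒜 x z).Nonempty := by
        by_contra hn
        have he := SepU_empty_iff.mp hn
        have hS : SepU 𝒜 x y = SepU 𝒜 y z := by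
          unfold SepU
          rw [UU_congr he, UU_congr' he, Set.union_comm]
        have hmn : mn 𝒜 x y n1 = mn 𝒜 y z n2 := mn_congr hS n1 n2
        have h1' : mn 𝒜 y z n2 ∈ UU 𝒜 z y := by
          rw [← hmn, ← UU_congr (z := y) he]
          exact h1
        exact UU_disjoint hlam h2 h1'
      by_contra hnxz
      have hzx : ltr 𝒜 z x := (ltr_total hlam hnexz.symm).mpr hnxz
      have n3' : (SepU 𝒜 z x).Nonempty := (SepU_comm 𝒜 x z) ▸ n3
      have h3 : mn 𝒜 z x n3' ∈ UU 𝒜 z x := ((ltr_pos n3').mp hzx).2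
      exact no_cycle hlam n1 n2 n3' h1 h2 h3
    · -- y and z are in exactly the same sets
      have he := SepU_empty_iff.mp n2
      have hS : SepU 𝒜 x z = SepU 𝒜 x y := by
        unfold SepU
        rw [UU_congr' (z := x) he, UU_congr (z := x) he]
      have n3 : (SepU 𝒜 x z).Nonempty := hS ▸ n1
      rw [ltr_pos n3]
      refine ⟨hnexz, ?_⟩
      have hmn : mn 𝒜 x z n3 = mn 𝒜 x y n1 := mn_congr hS n3 n1
      have h1 : mn 𝒜 x y n1 ∈ UU 𝒜 x y := ((ltr_pos n1).mp hxy).2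
      rw [hmn, ← UU_congr' (z := x) he]
      exact h1
  · -- x and y are in exactly the same sets
    have he := SepU_empty_iff.mp n1
    by_cases n2 : (SepU 𝒜 y z).Nonempty
    · have hS : SepU 𝒜 x z = SepU 𝒜 y z := by
        unfold SepU
        rw [UU_congr he, UU_congr' he]
      have n3 : (SepU 𝒜 x z).Nonempty := hS ▸ n2
      rw [ltr_pos n3]
      refine ⟨hnexz, ?_⟩
      have hmn : mn 𝒜 x z n3 = mn 𝒜 y z n2 := mn_congr hS n3 n2
      have h2 : mn 𝒜 y z n2 ∈ UU 𝒜 y z := ((ltr_pos n2).mp hyz).2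
      rw [hmn, UU_congr he]
      exact h2
    · -- no separators at all
      have he2 := SepU_empty_iff.mp n2
      have n3 : ¬ (SepU 𝒜 x z).Nonempty := by
        rw [SepU_empty_iff]
        intro A hA
        exact (he A hA).trans (he2 A hA)
      rw [ltr_neg n3]
      refine ⟨hnexz, ?_⟩
      have hw1 : WellOrderingRel x y := ((ltr_neg n1).mp hxy).2
      have hw2 : WellOrderingRel y z := ((ltr_neg n2).mp hyz).2
      exact trans_of WellOrderingRel hw1 hw2

theorem ltr_convex {𝒜 : Set (Set M)} (hlam : Lam 𝒜) {A : Set M} (hA : A ∈ 𝒜)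
    {x y z : M} (hxy : ltr 𝒜 x y) (hyz : ltr 𝒜 y z)
    (hxA : x ∈ A) (hzA : z ∈ A) (hyA : y ∉ A) : False := by
  have n1 : (SepU 𝒜 x y).Nonempty := ⟨x, Or.inl ⟨A, hA, hxA, hyA, hxA⟩⟩
  have n2 : (SepU 𝒜 y z).Nonempty := ⟨z, Or.inr ⟨A, hA, hzA, hyA, hzA⟩⟩
  have h1 : mn 𝒜 x y n1 ∈ UU 𝒜 x y := ((ltr_pos n1).mp hxy).2
  have h2 : mn 𝒜 y z n2 ∈ UU 𝒜 y z := ((ltr_pos n2).mp hyz).2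
  set r1 := mn 𝒜 x y n1 with hr1
  set r2 := mn 𝒜 y z n2 with hr2
  obtain ⟨C, hC, hxC, hyC, hrC⟩ := h1
  obtain ⟨B, hB, hyB, hzB, hrB⟩ := h2
  -- x ∉ B, else A and B violate laminarity
  have hxB : x ∉ B := by
    intro hxB
    have : A ⊆ B := lam_sub hlam hA hB hxA hxB hyB hyA
    exact hzB (this hzA)
  -- B separates x from y (contains y, not x), so r1 ≤ r2
  have m21 : ¬ WellOrderingRel r2 r1 := mn_min n1 (Or.inr ⟨B, hB, hyB, hxB, hrB⟩)
  -- r1 ∈ UU z y : either z ∈ C, or C ⊆ A and then r1 ∈ A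
  have hr1zy : r1 ∈ UU 𝒜 z y := by
    by_cases hzC : z ∈ C
    · exact ⟨C, hC, hzC, hyC, hrC⟩
    · have hCA : C ⊆ A := lam_sub hlam hC hA hxC hxA hzA hzC
      exact ⟨A, hA, hzA, hyA, hCA hrC⟩
  -- so r2 ≤ r1, hence r1 = r2
  have m12 : ¬ WellOrderingRel r1 r2 := mn_min n2 (Or.inr hr1zy)
  have hr12 : r1 = r2 := w_eq m12 m21
  -- r1 ∈ B ∩ C, y ∈ B \ C, so C ⊆ B, so x ∈ B: contradiction
  have : C ⊆ B := lam_sub hlam hC hB hrC (hr12 ▸ hrB) hyB hyC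
  exact hxB (this hxC)

end Stmt6Helper

/-- A subset `A` is convex with respect to a total order `T` if no point outside of `A`
lies `T`-between two points of `A`. -/
def ConvexWrt {α : Type*} (T : LinearOrder α) (A : Set α) : Prop :=
  ∀ x1 x2 x3 : α, T.lt x1 x2 → T.lt x2 x3 → x1 ∈ A → x3 ∈ A → x2 ∈ A

/-- If any two sets of a family `𝒜` are either disjoint or nested, then there is a total
order on `M` making every set of `𝒜` convex. -/
theorem stmt6 {M : Type*} (𝒜 : Set (Set M))
    (h : ∀ A1 ∈ 𝒜, ∀ A2 ∈ 𝒜, A1 ∩ A2 = ∅ ∨ A1 ⊆ A2 ∨ A2 ⊆ A1) :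
    ∃ T : LinearOrder M, ∀ A ∈ 𝒜, ConvexWrt T A := by
  classical
  have hlam : Stmt6Helper.Lam 𝒜 := h
  have hsto : IsStrictTotalOrder M (Stmt6Helper.ltr 𝒜) :=
    { irrefl := fun a ha => ha.1 rfl
      trans := fun _ _ _ => Stmt6Helper.ltr_trans hlam
      trichotomous := by
        intro a b
        by_cases hab : a = b
        · exact fun _ _ => hab
        by_cases hl : Stmt6Helper.ltr 𝒜 a b
        · exact fun h _ => absurd hl h
        · exact fun _ h => absurd ((Stmt6Helper.ltr_total hlam
            (fun e => hab e.symm)).mpr hl) h}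
  haveI := hsto
  refine ⟨linearOrderOfSTO (Stmt6Helper.ltr 𝒜), ?_⟩
  intro A hA x1 x2 x3 h12 h23 h1 h3
  by_contra h2
  exact Stmt6Helper.ltr_convex hlam hA h12 h23 h1 h3 h2
end
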